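/- Let P be a symmetric positive semidefinite n×n real matrix, and for j = 1,…,M let Λⱼ be diagonal k_j×k_j matrices with nonnegative entries, Hⱼ real k_j×n matrices, and fⱼⁱ : ℝ → ℝ continuous functions with ν·fⱼⁱ(ν) > 0 for ν ≠ 0. If P + ρ·∑ⱼ HⱼᵀΛⱼHⱼ is positive definite for some ρ ∈ ℝ, then the function V(x) = xᵀPx + 2·∑ⱼ ∑ᵢ Λⱼⁱ·∫₀^{Hⱼ⁽ⁱ⁾x} fⱼⁱ(τ)dτ satisfies V(x) > 0 for all x ≠ 0. -/

import Mathlib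

open Matrix intervalIntegral in
lemma sector_integral_nonneg (f : ℝ → ℝ) (hc : Continuous f)
    (hs : ∀ ν : ℝ, ν ≠ 0 → ν * f ν > 0) (y : ℝ) :
    0 ≤ ∫ τ in (0:ℝ)..y, f τ ∧ (y ≠ 0 → 0 < ∫ τ in (0:ℝ)..y, f τ) := by
  have hpos : ∀ τ : ℝ, 0 < τ → 0 < f τ := by
    intro τ hτ
    rcases mul_pos_iff.mp (hs τ hτ.ne') with ⟨_, h⟩ | ⟨h, _⟩
    · exact h
    · linarith
  have hneg : ∀ τ : ℝ, τ < 0 → f τ < 0 := by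
    intro τ hτ
    rcases mul_pos_iff.mp (hs τ hτ.ne) with ⟨h, _⟩ | ⟨_, h⟩
    · linarith
    · exact h
  have key : y ≠ 0 → 0 < ∫ τ in (0:ℝ)..y, f τ := by
    intro hy
    rcases lt_or_gt_of_ne hy with h | h
    · have : 0 < ∫ τ in y..(0:ℝ), (fun t => -f t) τ := by
        apply intervalIntegral_pos_of_pos_on ((hc.neg).intervalIntegrable _ _)
        · intro t ht
          simpa using hneg t ht.2
        · exact h
      rw [intervalIntegral.integral_neg] at this
      rw [intervalIntegral.integral_symm y 0]
      linarith
    · apply intervalIntegral_pos_of_pos_on (hc.intervalIntegrable _ _)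
      · intro t ht
        exact hpos t ht.1
      · exact h
  refine ⟨?_, key⟩
  rcases eq_or_ne y 0 with rfl | hy
  · simp
  · exact (key hy).le

open Matrix in
theorem persidskii_lyapunov_posdef {n M : ℕ} (k : Fin M → ℕ)
    (P : Matrix (Fin n) (Fin n) ℝ) (hP : P.PosSemidef)
    (Λ : (j : Fin M) → Fin (k j) → ℝ) (hΛ : ∀ j i, 0 ≤ Λ j i)
    (H : (j : Fin M) → Matrix (Fin (k j)) (Fin n) ℝ)
    (f : (j : Fin M) → Fin (k j) → ℝ → ℝ)
    (hfcont : ∀ j i, Continuous (f j i))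
    (hfsec : ∀ j i (ν : ℝ), ν ≠ 0 → ν * f j i ν > 0)
    (ρ : ℝ)
    (hpos : (P + ρ • ∑ j, (H j)ᵀ * Matrix.diagonal (Λ j) * H j).PosDef) :
    ∀ x : Fin n → ℝ, x ≠ 0 →
      0 < x ⬝ᵥ P.mulVec x +
        2 * ∑ j, ∑ i, Λ j i * ∫ τ in (0:ℝ)..((H j).mulVec x i), f j i τ := by
  intro x hx
  set I : (j : Fin M) → Fin (k j) → ℝ :=
    fun j i => ∫ τ in (0:ℝ)..((H j).mulVec x i), f j i τ with hI
  have hInn : ∀ j i, 0 ≤ I j i := fun j i =>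
    (sector_integral_nonneg (f j i) (hfcont j i) (hfsec j i) _).1
  have hIp : ∀ j i, (H j).mulVec x i ≠ 0 → 0 < I j i := fun j i h =>
    (sector_integral_nonneg (f j i) (hfcont j i) (hfsec j i) _).2 h
  have hterm_nonneg : ∀ j i, 0 ≤ Λ j i * I j i := fun j i =>
    mul_nonneg (hΛ j i) (hInn j i)
  have hsum_nonneg : 0 ≤ ∑ j, ∑ i, Λ j i * I j i :=
    Finset.sum_nonneg fun j _ => Finset.sum_nonneg fun i _ => hterm_nonneg j i
  have hPx : 0 ≤ x ⬝ᵥ P.mulVec x := by simpa using hP.dotProduct_mulVec_nonneg x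
  rcases lt_or_eq_of_le hPx with hPx' | hPx'
  · linarith
  · -- xᵀPx = 0, so Px = 0, and the quadratic form of the sum must be positive
    have hquad : ∀ j, x ⬝ᵥ ((H j)ᵀ * Matrix.diagonal (Λ j) * H j).mulVec x
        = ∑ i, Λ j i * ((H j).mulVec x i)^2 := by
      intro j
      have hmv : ((H j)ᵀ * Matrix.diagonal (Λ j) * H j) *ᵥ x
          = (H j)ᵀ *ᵥ (Matrix.diagonal (Λ j) *ᵥ ((H j) *ᵥ x)) := by
        rw [← Matrix.mulVec_mulVec, ← Matrix.mulVec_mulVec]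
      rw [hmv, Matrix.dotProduct_mulVec, Matrix.vecMul_transpose]
      simp only [dotProduct, Matrix.mulVec_diagonal]
      exact Finset.sum_congr rfl fun i _ => by ring
    have hpd := hpos.dotProduct_mulVec_pos hx
    simp only [Matrix.add_mulVec, dotProduct_add, Matrix.smul_mulVec,
      dotProduct_smul, smul_eq_mul, star_trivial] at hpd
    have hQ : 0 < x ⬝ᵥ P.mulVec x + ρ * (x ⬝ᵥ (∑ j, (H j)ᵀ * Matrix.diagonal (Λ j) * H j).mulVec x) := hpd
    have hsumQ : x ⬝ᵥ (∑ j, (H j)ᵀ * Matrix.diagonal (Λ j) * H j).mulVec x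
        = ∑ j, ∑ i, Λ j i * ((H j).mulVec x i)^2 := by
      have hsmv : (∑ j, (H j)ᵀ * Matrix.diagonal (Λ j) * H j) *ᵥ x
          = ∑ j, ((H j)ᵀ * Matrix.diagonal (Λ j) * H j) *ᵥ x :=
        map_sum (Matrix.mulVec.addMonoidHomLeft x) _ _
      rw [hsmv]
      have hdps : x ⬝ᵥ (∑ j, ((H j)ᵀ * Matrix.diagonal (Λ j) * H j) *ᵥ x)
          = ∑ j, x ⬝ᵥ (((H j)ᵀ * Matrix.diagonal (Λ j) * H j) *ᵥ x) := by
        simp only [dotProduct, Finset.sum_apply, Finset.mul_sum]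
        exact Finset.sum_comm
      rw [hdps]
      exact Finset.sum_congr rfl fun j _ => hquad j
    rw [hsumQ, ← hPx'] at hQ
    have hQnn : ∀ j i, 0 ≤ Λ j i * ((H j).mulVec x i)^2 := fun j i =>
      mul_nonneg (hΛ j i) (sq_nonneg _)
    have hQpos : 0 < ∑ j, ∑ i, Λ j i * ((H j).mulVec x i)^2 := by
      by_contra hcon
      push_neg at hcon
      have : (∑ j, ∑ i, Λ j i * ((H j).mulVec x i)^2) = 0 :=
        le_antisymm hcon (Finset.sum_nonneg fun j _ =>
          Finset.sum_nonneg fun i _ => hQnn j i)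
      rw [this] at hQ
      linarith
    have hexj : ∃ j, 0 < ∑ i, Λ j i * ((H j).mulVec x i)^2 := by
      by_contra hcon
      push_neg at hcon
      exact absurd hQpos (not_lt.mpr (Finset.sum_nonpos fun j _ => hcon j))
    obtain ⟨j, hj⟩ := hexj
    have hexi : ∃ i, 0 < Λ j i * ((H j).mulVec x i)^2 := by
      by_contra hcon
      push_neg at hcon
      exact absurd hj (not_lt.mpr (Finset.sum_nonpos fun i _ => hcon i))
    obtain ⟨i, hi⟩ := hexi
    have hΛpos : 0 < Λ j i := by
      rcases (hΛ j i).lt_or_eq with h | h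
      · exact h
      · rw [← h] at hi; simp at hi
    have hHx : (H j).mulVec x i ≠ 0 := by
      intro h0
      rw [h0] at hi; simp at hi
    have hsum_pos : 0 < ∑ j, ∑ i, Λ j i * I j i := by
      refine Finset.sum_pos' (fun j _ => Finset.sum_nonneg fun i _ => hterm_nonneg j i)
        ⟨j, Finset.mem_univ j, ?_⟩
      exact Finset.sum_pos' (fun i _ => hterm_nonneg j i)
        ⟨i, Finset.mem_univ i, mul_pos hΛpos (hIp j i hHx)⟩
    linarith
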